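/- Let X be a Banach space, T a bounded operator on X such that T² − T has finite rank. Then there exists an idempotent bounded operator P on X such that T − P has finite rank. -/

import Mathlib

open Polynomial

local notation "𝕏" => Polynomial.X

/-- Let `X` be a Banach space and `T` a bounded operator such that
`T² - T` has finite rank. Then there is an idempotent bounded operator `P` with
`T - P` of finite rank (idempotents in `L(X)/F₀(X)` lift to idempotents of `L(X)`). -/
theorem idempotent_lift_mod_finite_rank
    {X : Type*} [NormedAddCommGroup X] [NormedSpace ℂ X] [CompleteSpace X]
    (T : X →L[ℂ] X)
    (hT : FiniteDimensional ℂ (LinearMap.range ((T ∘L T - T : X →L[ℂ] X) : X →ₗ[ℂ] X))) :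
    ∃ P : X →L[ℂ] X, P ∘L P = P ∧ FiniteDimensional ℂ (LinearMap.range ((T - P : X →L[ℂ] X) : X →ₗ[ℂ] X)) := by
  classical
  set N : X →L[ℂ] X := T ∘L T - T with hNdef
  set V : Submodule ℂ X := LinearMap.range ((T ∘L T - T : X →L[ℂ] X) : X →ₗ[ℂ] X) with hVdef
  haveI : FiniteDimensional ℂ V := hT
  have hmemV : ∀ x : X, N x ∈ V := fun x => LinearMap.mem_range_self _ x
  let n : V →ₗ[ℂ] V :=
    LinearMap.restrict (N : X →ₗ[ℂ] X) (fun x _ => hmemV x)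
  have hn : ∀ v : V, (n v : X) = N (v : X) := fun v => rfl
  -- aeval commutes with restriction to V
  have hpow : ∀ (k : ℕ) (v : V), ((N : X →L[ℂ] X) ^ k) (v : X) = (((n ^ k) v : V) : X) := by
    intro k
    induction k with
    | zero => intro v; simp
    | succ k ih =>
      intro v
      rw [pow_succ, pow_succ]
      simp only [ContinuousLinearMap.mul_apply, Module.End.mul_apply]
      rw [← hn v, ih (n v)]
  have key : ∀ (p : ℂ[X]) (v : V), (aeval N p) (v : X) = (((aeval n p) v : V) : X) := by
    intro p
    induction p using Polynomial.induction_on' with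
    | add p q hp hq =>
      intro v
      simp only [map_add, ContinuousLinearMap.add_apply, LinearMap.add_apply,
        Submodule.coe_add, hp v, hq v]
    | monomial k a =>
      intro v
      simp only [aeval_monomial, ContinuousLinearMap.mul_apply, Module.End.mul_apply,
        Algebra.algebraMap_eq_smul_one, ContinuousLinearMap.smul_apply,
        LinearMap.smul_apply, ContinuousLinearMap.one_apply, Module.End.one_apply,
        Submodule.coe_smul, hpow k v]
  -- N is annihilated by q * X where q is the charpoly of n
  have hm₀ : aeval N (LinearMap.charpoly n * Polynomial.X) = 0 := by
    ext x
    have h1 : (aeval N (LinearMap.charpoly n)) (N x) =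
        (((aeval n (LinearMap.charpoly n)) ⟨N x, hmemV x⟩ : V) : X) :=
      key (LinearMap.charpoly n) ⟨N x, hmemV x⟩
    rw [LinearMap.aeval_self_charpoly] at h1
    simp only [map_mul, aeval_X, ContinuousLinearMap.mul_apply,
      ContinuousLinearMap.zero_apply, h1, LinearMap.zero_apply, ZeroMemClass.coe_zero]
  -- T is annihilated by m
  set m : ℂ[X] := (LinearMap.charpoly n * Polynomial.X).comp (𝕏 ^ 2 - 𝕏) with hmdef
  have hs_eval : aeval T ((𝕏 : ℂ[X]) ^ 2 - 𝕏) = N := by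
    rw [map_sub, aeval_X_pow, aeval_X, hNdef, sq, ContinuousLinearMap.mul_def]
  have hm : aeval T m = 0 := by
    rw [hmdef, aeval_comp, hs_eval, hm₀]
  -- m is nonzero
  have hm₀monic : (LinearMap.charpoly n * Polynomial.X).Monic :=
    (LinearMap.charpoly_monic n).mul monic_X
  have hsmonic : ((𝕏 : ℂ[X]) ^ 2 - 𝕏).Monic :=
    monic_X_pow_sub (by rw [degree_X]; decide)
  have hsdeg : ((𝕏 : ℂ[X]) ^ 2 - 𝕏).natDegree = 2 := by compute_degree!
  have hmm : m.Monic := by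
    unfold Polynomial.Monic
    rw [hmdef, leadingCoeff_comp (by rw [hsdeg]; norm_num)]
    rw [hm₀monic.leadingCoeff, hsmonic.leadingCoeff, one_pow, one_mul]
  have hmne : m ≠ 0 := hmm.ne_zero
  -- set M = m * X * (X - 1), factor out the root 1
  set M : ℂ[X] := m * (𝕏 * (𝕏 - C 1)) with hMdef
  have hM0 : M ≠ 0 := mul_ne_zero hmne (monic_X.mul (monic_X_sub_C 1)).ne_zero
  have hb : 0 < M.rootMultiplicity 1 := by
    rw [rootMultiplicity_pos hM0]
    simp [hMdef, IsRoot]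
  obtain ⟨B, hMB, hBnd⟩ := M.exists_eq_pow_rootMultiplicity_mul_and_not_dvd hM0 1
  set A : ℂ[X] := (𝕏 - C 1) ^ M.rootMultiplicity 1 with hAdef
  have h1A : (𝕏 - C (1:ℂ)) ∣ A := dvd_pow_self _ hb.ne'
  have hcopAB : IsCoprime A B :=
    (((irreducible_X_sub_C (1:ℂ)).coprime_iff_not_dvd).2 hBnd).pow_left
  have hcopX1 : IsCoprime (𝕏 : ℂ[X]) (𝕏 - C 1) := by
    refine (irreducible_X.coprime_iff_not_dvd).2 ?_
    rw [X_dvd_iff]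
    simp
  have hXB : (𝕏 : ℂ[X]) ∣ B := by
    have hXM : (𝕏 : ℂ[X]) ∣ M := ⟨m * (𝕏 - C 1), by rw [hMdef]; ring⟩
    exact (hcopX1.pow_right).dvd_of_dvd_mul_left (by rwa [hMB] at hXM)
  obtain ⟨u, v, huv⟩ := hcopAB
  set f : ℂ[X] := v * B with hfdef
  -- f - X is divisible by X (X - 1)
  have hfX : (𝕏 * (𝕏 - C 1) : ℂ[X]) ∣ f - 𝕏 := by
    refine hcopX1.mul_dvd ?_ ?_
    · exact dvd_sub (hXB.mul_left v) dvd_rfl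
    · have hrw : f - 𝕏 = (-u) * A - (𝕏 - C 1) := by
        rw [hfdef, C_1]; linear_combination huv
      rw [hrw]
      exact dvd_sub (h1A.mul_left _) dvd_rfl
  -- f * f - f is divisible by m
  have hfm : m ∣ f * f - f := by
    refine ⟨(𝕏 * (𝕏 - C 1)) * (-(v * u)), ?_⟩
    have : m * (𝕏 * (𝕏 - C 1)) = A * B := by rw [← hMdef, hMB]
    rw [hfdef, C_1]
    rw [C_1] at this
    linear_combination (v * B) * huv + (v * u) * this
  obtain ⟨k, hk⟩ := hfX
  obtain ⟨c, hc⟩ := hfm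
  refine ⟨aeval T f, ?_, ?_⟩
  · have h0 : aeval T f * aeval T f - aeval T f = 0 := by
      rw [← map_mul, ← map_sub, hc, map_mul, hm, zero_mul]
    rw [← ContinuousLinearMap.mul_def]
    exact sub_eq_zero.mp h0
  · have hmulN : aeval T ((𝕏 * (𝕏 - C 1) : ℂ[X])) = N := by
      rw [map_mul, aeval_X, map_sub, aeval_X, aeval_C, map_one, hNdef]
      ext x
      simp [ContinuousLinearMap.mul_apply, ContinuousLinearMap.sub_apply,
        ContinuousLinearMap.one_apply, map_sub, ContinuousLinearMap.comp_apply]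
    have hTP : T - aeval T f = N ∘L aeval T (-k) := by
      have h1 : (𝕏 : ℂ[X]) - f = (𝕏 * (𝕏 - C 1) : ℂ[X]) * (-k) := by
        rw [C_1]; rw [C_1] at hk; linear_combination -hk
      have h2 : T - aeval T f = aeval T ((𝕏 : ℂ[X]) - f) := by rw [map_sub, aeval_X]
      rw [h2, h1, map_mul, hmulN, ContinuousLinearMap.mul_def]
    have hle : LinearMap.range ((T - aeval T f : X →L[ℂ] X) : X →ₗ[ℂ] X) ≤ V := by
      rintro y ⟨x, rfl⟩
      rw [hTP]
      exact hmemV _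
    exact Submodule.finiteDimensional_of_le hle
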